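/- Let μ be a centred probability measure on ℝ with distribution function F, b < 0 < b̄, and suppose ξ ∈ (F(b), F(b̄−)) and π* ∈ [F(b̄−),1) satisfy m̃_ξ^{F(b̄−)} + b̄(1−F(b̄−)+ξ) = 0 and m̃^ξ + m̃_{F(b̄−)}^{π*} = b(ξ + π* − F(b̄−)). Define ν = ((π*−F(b̄−)+ξ)δ_b + μ_{π*})/(1−F(b̄−)+ξ). Then ν has barycentre b̄. -/

import Mathlib

open MeasureTheory Set Filter ProbabilityTheory
open scoped Topology

/-- Distribution function of `μ`. -/
noncomputable def distF (μ : Measure ℝ) (x : ℝ) : ℝ := (μ (Iic x)).toReal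

/-- Left limit `F(x-)` of the distribution function. -/
noncomputable def distFm (μ : Measure ℝ) (x : ℝ) : ℝ := (μ (Iio x)).toReal

/-- Quantile function of `μ`. -/
noncomputable def quantile (μ : Measure ℝ) (u : ℝ) : ℝ :=
  sInf {x : ℝ | u ≤ distF μ x}

/-- The sub-probability measure `μ_p^q`, i.e. `μ` restricted to its quantile range `(p,q]`,
realised as the image under the quantile function of Lebesgue measure on `(p,q]`. -/
noncomputable def qmeas (μ : Measure ℝ) (p q : ℝ) : Measure ℝ :=
  (volume.restrict (Ioc p q)).map (quantile μ)

/-- `m̃_p^q = ∫ x dμ_p^q`. -/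
noncomputable def mtil (μ : Measure ℝ) (p q : ℝ) : ℝ :=
  ∫ u in Ioc p q, quantile μ u

/-- The barycentre `m_p^q` of `μ` restricted to the quantile range `(p,q]`. -/
noncomputable def bary (μ : Measure ℝ) (p q : ℝ) : ℝ :=
  if p < q then (q - p)⁻¹ * mtil μ p q else quantile μ q

section Aux

variable {μ : Measure ℝ} [IsProbabilityMeasure μ]

lemma quantile_eq_cdf (u : ℝ) : quantile μ u = sInf {x : ℝ | u ≤ cdf μ x} := by
  unfold quantile distF
  congr 1
  ext x
  simp only [mem_setOf_eq, cdf_eq_real, measureReal_def]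

lemma qset_nonempty {u : ℝ} (hu : u < 1) : {x : ℝ | u ≤ cdf μ x}.Nonempty :=
  ((tendsto_cdf_atTop μ).eventually (eventually_ge_nhds hu)).exists

lemma qset_bddBelow {u : ℝ} (hu : 0 < u) : BddBelow {x : ℝ | u ≤ cdf μ x} := by
  obtain ⟨y, hy⟩ := ((tendsto_cdf_atBot μ).eventually (eventually_lt_nhds hu)).exists
  refine ⟨y, fun z hz => ?_⟩
  by_contra h
  push_neg at h
  exact absurd (hz.trans (monotone_cdf μ h.le)) (not_le.2 hy)

lemma le_cdf_quantile {u : ℝ} (hu0 : 0 < u) (hu1 : u < 1) : u ≤ cdf μ (quantile μ u) := by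
  rw [quantile_eq_cdf]
  set S := {x : ℝ | u ≤ cdf μ x} with hS
  set m := sInf S with hm
  have hne : S.Nonempty := qset_nonempty hu1
  have hbdd : BddBelow S := qset_bddBelow hu0
  have h1 : ∀ x ∈ Ioi m, u ≤ cdf μ x := by
    intro x hx
    obtain ⟨z, hzS, hzx⟩ := (csInf_lt_iff hbdd hne).1 hx
    exact le_trans hzS (monotone_cdf μ hzx.le)
  have h2 : Tendsto (cdf μ) (𝓝[>] m) (𝓝 (cdf μ m)) :=
    ((cdf μ).right_continuous m).tendsto.mono_left (nhdsWithin_mono m Ioi_subset_Ici_self)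
  exact ge_of_tendsto h2 (eventually_nhdsWithin_of_forall h1)

lemma quantile_le_iff {u x : ℝ} (hu0 : 0 < u) (hu1 : u < 1) :
    quantile μ u ≤ x ↔ u ≤ cdf μ x := by
  constructor
  · intro h
    exact (le_cdf_quantile hu0 hu1).trans (monotone_cdf μ h)
  · intro h
    rw [quantile_eq_cdf]
    exact csInf_le (qset_bddBelow hu0) h

lemma quantile_monotoneOn : MonotoneOn (quantile μ) (Ioo (0:ℝ) 1) := by
  intro u hu v hv huv
  rw [quantile_eq_cdf, quantile_eq_cdf]
  exact csInf_le_csInf (qset_bddBelow hu.1) (qset_nonempty hv.2)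
    (fun x hx => le_trans huv hx)

lemma quantile_aemeasurable : AEMeasurable (quantile μ) (volume.restrict (Ioo (0:ℝ) 1)) :=
  aemeasurable_restrict_of_monotoneOn measurableSet_Ioo quantile_monotoneOn

lemma map_quantile : (volume.restrict (Ioo (0:ℝ) 1)).map (quantile μ) = μ := by
  have hQ : AEMeasurable (quantile μ) (volume.restrict (Ioo (0:ℝ) 1)) := quantile_aemeasurable
  have hprob : IsProbabilityMeasure (volume.restrict (Ioo (0:ℝ) 1)) :=
    ⟨by simp [Real.volume_Ioo]⟩
  have : IsProbabilityMeasure ((volume.restrict (Ioo (0:ℝ) 1)).map (quantile μ)) :=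
    Measure.isProbabilityMeasure_map hQ
  refine Measure.ext_of_Iic _ _ (fun x => ?_)
  rw [Measure.map_apply_of_aemeasurable hQ measurableSet_Iic,
    Measure.restrict_apply' measurableSet_Ioo]
  rcases lt_or_ge (cdf μ x) 1 with hc | hc
  · have hset : quantile μ ⁻¹' Iic x ∩ Ioo 0 1 = Ioc 0 (cdf μ x) := by
      ext u
      simp only [mem_inter_iff, mem_preimage, mem_Iic, mem_Ioo, mem_Ioc]
      constructor
      · rintro ⟨h1, h2, h3⟩
        exact ⟨h2, (quantile_le_iff h2 h3).1 h1⟩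
      · rintro ⟨h1, h2⟩
        have h3 : u < 1 := lt_of_le_of_lt h2 hc
        exact ⟨(quantile_le_iff h1 h3).2 h2, h1, h3⟩
    rw [hset, Real.volume_Ioc, ← ofReal_cdf μ x]
    simp
  · have hc1 : cdf μ x = 1 := le_antisymm (cdf_le_one μ x) hc
    have hset : quantile μ ⁻¹' Iic x ∩ Ioo 0 1 = Ioo 0 1 := by
      ext u
      simp only [mem_inter_iff, mem_preimage, mem_Iic, mem_Ioo]
      refine ⟨fun h => h.2, fun h => ⟨(quantile_le_iff h.1 h.2).2 ?_, h⟩⟩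
      rw [hc1]
      exact h.2.le
    rw [hset, Real.volume_Ioo, ← ofReal_cdf μ x, hc1]
    simp

lemma integrable_quantile (hint : Integrable id μ) :
    Integrable (quantile μ) (volume.restrict (Ioo (0:ℝ) 1)) := by
  rw [← map_quantile (μ := μ)] at hint
  have := (integrable_map_measure hint.aestronglyMeasurable quantile_aemeasurable).1 hint
  simpa [Function.comp] using this

end Aux

theorem stmt14 (μ : Measure ℝ) [IsProbabilityMeasure μ]
    (hint : Integrable id μ) (hcent : ∫ x, x ∂μ = 0)
    (lb ub : ℝ) (hlb : lb < 0) (hub : 0 < ub)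
    (ξ π : ℝ) (hξ : ξ ∈ Ioo (distF μ lb) (distFm μ ub))
    (hπ : π ∈ Ico (distFm μ ub) 1)
    (heq1 : mtil μ ξ (distFm μ ub) + ub * (1 - distFm μ ub + ξ) = 0)
    (heq2 : mtil μ 0 ξ + mtil μ (distFm μ ub) π =
      lb * (ξ + π - distFm μ ub)) :
    (∫ x, x ∂((ENNReal.ofReal (1 - distFm μ ub + ξ))⁻¹ •
      (ENNReal.ofReal (π - distFm μ ub + ξ) • Measure.dirac lb +
        qmeas μ π 1))) = ub := by
  set Fm := distFm μ ub with hFmdef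
  have h0F : 0 ≤ distF μ lb := ENNReal.toReal_nonneg
  have hξ0 : 0 < ξ := lt_of_le_of_lt h0F hξ.1
  have hξF : ξ < Fm := hξ.2
  have hFπ : Fm ≤ π := hπ.1
  have hπ1 : π < 1 := hπ.2
  have hπ0 : 0 < π := lt_of_lt_of_le (hξ0.trans hξF) hFπ
  have hc : 0 < 1 - Fm + ξ := by linarith
  have ha : 0 < π - Fm + ξ := by linarith
  have hQint : Integrable (quantile μ) (volume.restrict (Ioo (0:ℝ) 1)) :=
    integrable_quantile hint
  have hQae : AEMeasurable (quantile μ) (volume.restrict (Ioo (0:ℝ) 1)) :=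
    quantile_aemeasurable
  have hres : ∀ a b : ℝ, volume.restrict (Ioc a b) = volume.restrict (Ioo a b) := by
    intro a b
    exact (Measure.restrict_congr_set Ioo_ae_eq_Ioc).symm
  have hIOn : ∀ a b : ℝ, 0 ≤ a → b ≤ 1 → IntegrableOn (quantile μ) (Ioc a b) volume := by
    intro a b h1 h2
    rw [IntegrableOn, hres]
    exact hQint.mono_measure (Measure.restrict_mono (Ioo_subset_Ioo h1 h2) le_rfl)
  have hae : ∀ a b : ℝ, 0 ≤ a → b ≤ 1 →
      AEMeasurable (quantile μ) (volume.restrict (Ioc a b)) := by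
    intro a b h1 h2
    rw [hres]
    exact hQae.mono_measure (Measure.restrict_mono (Ioo_subset_Ioo h1 h2) le_rfl)
  -- total integral of the quantile function is the mean of μ, which is 0
  have htot : mtil μ 0 1 = 0 := by
    have h1 : ∫ y, y ∂((volume.restrict (Ioo (0:ℝ) 1)).map (quantile μ)) =
        ∫ u in Ioo (0:ℝ) 1, quantile μ u :=
      integral_map hQae aestronglyMeasurable_id
    rw [map_quantile, hcent] at h1
    unfold mtil
    rw [integral_Ioc_eq_integral_Ioo, ← h1]
  -- splitting of integrals
  have hsplit : ∀ a b c : ℝ, 0 ≤ a → a ≤ b → b ≤ c → c ≤ 1 →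
      mtil μ a c = mtil μ a b + mtil μ b c := by
    intro a b c h0 h1 h2 h3
    unfold mtil
    rw [← Ioc_union_Ioc_eq_Ioc h1 h2,
      setIntegral_union (Ioc_disjoint_Ioc_of_le le_rfl) measurableSet_Ioc
        (hIOn a b h0 (h2.trans h3)) (hIOn b c (h0.trans h1) h3)]
  have e1 : mtil μ 0 1 = mtil μ 0 ξ + mtil μ ξ Fm + mtil μ Fm π + mtil μ π 1 := by
    rw [hsplit 0 ξ 1 le_rfl hξ0.le (by linarith) le_rfl,
      hsplit ξ Fm 1 hξ0.le hξF.le (by linarith) le_rfl,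
      hsplit Fm π 1 (by linarith) hFπ hπ1.le le_rfl]
    ring
  have hzero : mtil μ 0 ξ + mtil μ ξ Fm + mtil μ Fm π + mtil μ π 1 = 0 := by
    rw [← e1, htot]
  have key : (π - Fm + ξ) * lb + mtil μ π 1 = ub * (1 - Fm + ξ) := by
    linear_combination hzero - heq1 - heq2
  -- compute the integral against qmeas
  have hqm_val : ∫ x, x ∂(qmeas μ π 1) = mtil μ π 1 := by
    unfold qmeas mtil
    exact integral_map (hae π 1 hπ0.le le_rfl) aestronglyMeasurable_id
  have hqm_int : Integrable (fun x : ℝ => x) (qmeas μ π 1) := by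
    unfold qmeas
    have h := (integrable_map_measure
      (aestronglyMeasurable_id (μ := ((volume.restrict (Ioc π 1)).map (quantile μ))))
      (hae π 1 hπ0.le le_rfl)).2
    exact h (by simpa [Function.comp, IntegrableOn] using hIOn π 1 hπ0.le le_rfl)
  have hd_int : Integrable (fun x : ℝ => x)
      (ENNReal.ofReal (π - Fm + ξ) • Measure.dirac lb) := by
    refine Integrable.smul_measure ?_ ENNReal.ofReal_ne_top
    have h : (fun x : ℝ => x) =ᵐ[Measure.dirac lb] fun _ => lb := by
      rw [Filter.EventuallyEq, ae_dirac_eq]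
      exact Filter.eventually_pure.2 rfl
    exact (integrable_const lb).congr h.symm
  rw [integral_smul_measure, integral_add_measure hd_int hqm_int, integral_smul_measure,
    integral_dirac, hqm_val, ENNReal.toReal_inv, ENNReal.toReal_ofReal hc.le,
    ENNReal.toReal_ofReal ha.le]
  have : (π - Fm + ξ) * lb + mtil μ π 1 = ub * (1 - Fm + ξ) := key
  simp only [smul_eq_mul]
  field_simp
  linarith [key]
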